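/- Let P be a Markov transition kernel on a measurable space X and V : X → [1,∞) measurable with PV finite everywhere. Suppose P^N V ≤ δ^N V + L·1_X pointwise for some N ∈ ℕ*, δ ∈ (0,1), L > 0. Then for every continuous linear functional f' on B_V (the space of f with sup |f|/V < ∞), the adjoint satisfies ‖(P*)^N f'‖_{B_V'} ≤ δ^N ‖f'‖_{B_V'} + L ‖f'‖_{B_0'}, where ‖g'‖_{B_0'} = ⟨|g'|, 1_X⟩ and ‖g'‖_{B_V'} = ⟨|g'|, V⟩ using the Banach lattice structure of the dual. -/

import Mathlib

open MeasureTheory ProbabilityTheory ENNReal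

/-- Iterates `P^n` of a transition kernel. -/
noncomputable def kpow {X : Type*} [MeasurableSpace X] (P : Kernel X X) : ℕ → Kernel X X
  | 0 => Kernel.id
  | n + 1 => P ∘ₖ kpow P n

instance kpow_markov {X : Type*} [MeasurableSpace X] (P : Kernel X X) [IsMarkovKernel P]
    (n : ℕ) : IsMarkovKernel (kpow P n) := by
  induction n with
  | zero => exact inferInstanceAs (IsMarkovKernel Kernel.id)
  | succ n ih => exact inferInstanceAs (IsMarkovKernel (P ∘ₖ kpow P n))

instance bind_markov_finite {X : Type*} [MeasurableSpace X] (μ : Measure X)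
    [IsFiniteMeasure μ] (P : Kernel X X) [IsMarkovKernel P] :
    IsFiniteMeasure (μ.bind (fun x => P x)) := by
  constructor
  rw [Measure.bind_apply MeasurableSet.univ (Kernel.measurable P).aemeasurable]
  calc ∫⁻ x, (P x) Set.univ ∂μ ≤ ∫⁻ _, 1 ∂μ := by
        exact lintegral_mono fun x => le_of_eq (measure_univ)
    _ < ⊤ := by simp

/-- The adjoint `P*` of a Markov kernel acting on a continuous linear functional on `B_V`,
identified with a finite signed measure (via Jordan decomposition). -/
noncomputable def kAdj {X : Type*} [MeasurableSpace X] (P : Kernel X X) [IsMarkovKernel P]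
    (s : SignedMeasure X) : SignedMeasure X :=
  (s.toJordanDecomposition.posPart.bind (fun x => P x)).toSignedMeasure -
    (s.toJordanDecomposition.negPart.bind (fun x => P x)).toSignedMeasure


lemma coe_le_of_le_toReal {c : ℝ≥0∞} (hc : c ≠ ⊤) {r : NNReal} (h : (r : ℝ) ≤ c.toReal) :
    (r : ℝ≥0∞) ≤ c := by
  rw [← ENNReal.coe_toNNReal hc, ENNReal.coe_le_coe, ← NNReal.coe_le_coe]
  exact h

lemma tv_sub_le {X : Type*} [MeasurableSpace X] (a b : Measure X) [IsFiniteMeasure a]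
    [IsFiniteMeasure b] :
    (a.toSignedMeasure - b.toSignedMeasure).totalVariation ≤ a + b := by
  set s := a.toSignedMeasure - b.toSignedMeasure with hs
  obtain ⟨i, hi₁, hi₂, hi₃, hpos, hneg⟩ := s.toJordanDecomposition_spec
  have hsapp : ∀ A : Set X, MeasurableSet A → s A = (a A).toReal - (b A).toReal := by
    intro A hA
    rw [hs, Measure.toSignedMeasure_sub_apply hA]
    rfl
  rw [Measure.le_iff]
  intro E hE
  rw [SignedMeasure.totalVariation, Measure.add_apply, hpos, hneg,
    SignedMeasure.toMeasureOfZeroLE_apply _ hi₂ hi₁ hE,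
    SignedMeasure.toMeasureOfLEZero_apply _ hi₃ hi₁.compl hE, Measure.add_apply]
  refine add_le_add ?_ ?_
  · refine le_trans (coe_le_of_le_toReal (measure_ne_top a (i ∩ E)) ?_)
      (measure_mono Set.inter_subset_right)
    rw [NNReal.coe_mk, hsapp _ (hi₁.inter hE)]
    have := ENNReal.toReal_nonneg (a := b (i ∩ E))
    linarith
  · refine le_trans (coe_le_of_le_toReal (measure_ne_top b (iᶜ ∩ E)) ?_)
      (measure_mono Set.inter_subset_right)
    rw [NNReal.coe_mk, hsapp _ (hi₁.compl.inter hE)]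
    have := ENNReal.toReal_nonneg (a := a (iᶜ ∩ E))
    linarith

/-- Doeblin–Fortet inequality on the dual:
under the drift condition `P^N V ≤ δ^N V + L 1_X`, for every `f'` in the dual of `B_V`
(identified with a signed measure `s`, with `‖g'‖_{B_V'} = ⟨|g'|, V⟩` and
`‖g'‖_{B_0'} = ⟨|g'|, 1_X⟩`), one has
`‖(P*)^N f'‖_{B_V'} ≤ δ^N ‖f'‖_{B_V'} + L ‖f'‖_{B_0'}`. -/
theorem stmt1 {X : Type*} [MeasurableSpace X] (P : Kernel X X) [IsMarkovKernel P]
    (V : X → ℝ) (hVm : Measurable V) (hV : ∀ x, 1 ≤ V x)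
    (N : ℕ) (hN : 0 < N) (δ L : ℝ) (hδ : δ ∈ Set.Ioo (0 : ℝ) 1) (hL : 0 < L)
    (hdrift : ∀ x, ∫⁻ y, ENNReal.ofReal (V y) ∂(kpow P N x)
      ≤ ENNReal.ofReal (δ ^ N * V x + L))
    (s : SignedMeasure X) :
    ∫⁻ x, ENNReal.ofReal (V x) ∂(kAdj (kpow P N) s).totalVariation
      ≤ ENNReal.ofReal (δ ^ N) * ∫⁻ x, ENNReal.ofReal (V x) ∂s.totalVariation
        + ENNReal.ofReal L * s.totalVariation Set.univ := by
  set Q := kpow P N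
  set a := s.toJordanDecomposition.posPart with ha
  set b := s.toJordanDecomposition.negPart with hb
  have hQmeas : Measurable fun x => Q x := Q.measurable
  have hVE : Measurable fun x => ENNReal.ofReal (V x) := hVm.ennreal_ofReal
  have hδN : (0 : ℝ) ≤ δ ^ N := pow_nonneg hδ.1.le N
  have hpt : ∀ (μ : Measure X),
      ∫⁻ x, ENNReal.ofReal (V x) ∂(μ.bind fun x => Q x)
        ≤ ENNReal.ofReal (δ ^ N) * ∫⁻ x, ENNReal.ofReal (V x) ∂μ
          + ENNReal.ofReal L * μ Set.univ := by
    intro μ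
    rw [Measure.lintegral_bind hQmeas.aemeasurable hVE.aemeasurable]
    calc ∫⁻ x, (∫⁻ y, ENNReal.ofReal (V y) ∂(Q x)) ∂μ
        ≤ ∫⁻ x, ENNReal.ofReal (δ ^ N * V x + L) ∂μ := lintegral_mono fun x => hdrift x
      _ = ∫⁻ x, (ENNReal.ofReal (δ ^ N) * ENNReal.ofReal (V x) + ENNReal.ofReal L) ∂μ := by
          refine lintegral_congr fun x => ?_
          rw [ENNReal.ofReal_add (mul_nonneg hδN (le_trans zero_le_one (hV x))) hL.le,
            ENNReal.ofReal_mul hδN]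
      _ = ENNReal.ofReal (δ ^ N) * ∫⁻ x, ENNReal.ofReal (V x) ∂μ
            + ENNReal.ofReal L * μ Set.univ := by
          rw [lintegral_add_right _ measurable_const, lintegral_const,
            lintegral_const_mul _ hVE]
  have htv := tv_sub_le (a.bind fun x => Q x) (b.bind fun x => Q x)
  have htvs : s.totalVariation = a + b := rfl
  calc ∫⁻ x, ENNReal.ofReal (V x) ∂(kAdj Q s).totalVariation
      ≤ ∫⁻ x, ENNReal.ofReal (V x) ∂((a.bind fun x => Q x) + (b.bind fun x => Q x)) :=
        lintegral_mono' htv le_rfl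
    _ = ∫⁻ x, ENNReal.ofReal (V x) ∂(a.bind fun x => Q x)
          + ∫⁻ x, ENNReal.ofReal (V x) ∂(b.bind fun x => Q x) := lintegral_add_measure _ _ _
    _ ≤ (ENNReal.ofReal (δ ^ N) * ∫⁻ x, ENNReal.ofReal (V x) ∂a
            + ENNReal.ofReal L * a Set.univ)
          + (ENNReal.ofReal (δ ^ N) * ∫⁻ x, ENNReal.ofReal (V x) ∂b
            + ENNReal.ofReal L * b Set.univ) := add_le_add (hpt a) (hpt b)
    _ = ENNReal.ofReal (δ ^ N) * (∫⁻ x, ENNReal.ofReal (V x) ∂a + ∫⁻ x, ENNReal.ofReal (V x) ∂b)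
          + ENNReal.ofReal L * (a Set.univ + b Set.univ) := by ring
    _ = ENNReal.ofReal (δ ^ N) * ∫⁻ x, ENNReal.ofReal (V x) ∂s.totalVariation
          + ENNReal.ofReal L * s.totalVariation Set.univ := by
        rw [htvs, lintegral_add_measure, Measure.add_apply]
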